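/- Let θ be a fixed nonincreasing probability mass function on ℕ and let f̂^{(n)} = T(f^{(n)}) be the naive estimator based on the first n observations of an i.i.d. sequence from θ. Then for every δ > 0, n^{1/2−δ} · ‖f̂^{(n)} − θ‖_∞ → 0 almost surely as n → ∞, where ‖g‖_∞ = sup_{x≥1} |g_x|. -/

import Mathlib

open MeasureTheory ProbabilityTheory Filter Topology Real Set

noncomputable section

namespace Species

/-- `θ` is a nonincreasing probability mass function on `ℕ` (0-based: the index
`x : ℕ` corresponds to the paper's species rank `x + 1`). -/
def IsOrderedPMF (θ : ℕ → ℝ) : Prop :=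
  (∀ x, 0 ≤ θ x) ∧ Antitone θ ∧ Summable θ ∧ ∑' x, θ x = 1

/-- A possibly defective nonincreasing probability mass function: nonnegative,
nonincreasing, with total mass at most one (the deficit `1 - ∑' φ` is the blob). -/
def IsDefectivePMF (φ : ℕ → ℝ) : Prop :=
  (∀ x, 0 ≤ φ x) ∧ Antitone φ ∧ Summable φ ∧ ∑' x, φ x ≤ 1

/-- The `L¹` distance `‖φ - θ‖₁ = ∑ᵢ |φᵢ - θᵢ|`. -/
def dist1 (φ θ : ℕ → ℝ) : ℝ := ∑' i, |φ i - θ i|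

/-- `N` is a partition of `n`: a nonincreasing sequence of counts summing to `n`
(in particular `N i = 0` for `i ≥ n`). -/
def IsPartitionOf (n : ℕ) (N : ℕ → ℕ) : Prop :=
  Antitone N ∧ (∑ i ∈ Finset.range n, N i) = n ∧ ∀ i, n ≤ i → N i = 0

/-- A valid assignment `χ` in the extended model: every population rank
(`some α`) has at most one preimage among the observed species, the blob
(`none`) is only allowed for species observed at most once, and unobserved
species are sent to the blob (their factor `φ_α ^ 0 = 1` is immaterial). -/
def ValidChi (N : ℕ → ℕ) (χ : ℕ → Option ℕ) : Prop :=
  (∀ i j α, χ i = some α → χ j = some α → i = j) ∧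
  (∀ i, χ i = none → N i ≤ 1) ∧
  (∀ i, N i = 0 → χ i = none)

/-- The blob count `N₀ = n - ∑_{α ≥ 1} N_{χ⁻¹(α)}` of an assignment `χ`. -/
def blobCount (n : ℕ) (N : ℕ → ℕ) (χ : ℕ → Option ℕ) : ℕ :=
  ∑ i ∈ Finset.range n, (if χ i = none then N i else 0)

/-- The extended-model likelihood
`lik(φ) = ∑_χ φ₀^{N₀} ∏_{α} φ_α^{N_{χ⁻¹(α)}}` of the parameter `φ`
given the observed partition `N` of `n`, where `φ₀ = 1 - ∑' φ`. -/
def lik (φ : ℕ → ℝ) (n : ℕ) (N : ℕ → ℕ) : ℝ :=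
  ∑' χ : {c : ℕ → Option ℕ // ValidChi N c},
    (1 - ∑' α, φ α) ^ blobCount n N χ.1 *
      ∏ i ∈ Finset.range n, Option.elim (χ.1 i) 1 (fun α => φ α ^ N i)

/-- The probability `P^{(n,φ)}({N})` of observing the partition `N`, i.e. the
likelihood together with the multinomial coefficient `n! / (N₀! ∏ᵢ Nᵢ!)`. -/
def partitionProb (φ : ℕ → ℝ) (n : ℕ) (N : ℕ → ℕ) : ℝ :=
  ∑' χ : {c : ℕ → Option ℕ // ValidChi N c},
    ((n.factorial : ℝ) /
        (((blobCount n N χ.1).factorial : ℝ) *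
          ∏ i ∈ Finset.range n, ((N i).factorial : ℝ))) *
      (1 - ∑' α, φ α) ^ blobCount n N χ.1 *
      ∏ i ∈ Finset.range n, Option.elim (χ.1 i) 1 (fun α => φ α ^ N i)

/-- `P^{(n,φ)}(A)` for a set `A` of partitions of `n`. -/
def PP (φ : ℕ → ℝ) (n : ℕ) (A : Set (ℕ → ℕ)) : ℝ :=
  ∑' N : {N : ℕ → ℕ // IsPartitionOf n N ∧ N ∈ A}, partitionProb φ n N.1

/-- An extended maximum likelihood estimator for the observed partition `N`. -/
def IsExtendedMLE (n : ℕ) (N : ℕ → ℕ) (θhat : ℕ → ℝ) : Prop :=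
  IsDefectivePMF θhat ∧ ∀ φ, IsDefectivePMF φ → lik φ n N ≤ lik θhat n N

/-- A sieved parameter at truncation level `k`: a nonincreasing nonnegative
vector supported on `{0, …, k-1}` with total mass at most one. -/
def IsSievedParam (k : ℕ) (φ : ℕ → ℝ) : Prop :=
  (∀ i, 0 ≤ φ i) ∧ (∀ i j, i ≤ j → j < k → φ j ≤ φ i) ∧
  (∀ i, k ≤ i → φ i = 0) ∧ (∑ i ∈ Finset.range k, φ i) ≤ 1

/-- Valid assignments in the sieved model at truncation level `k`. -/
def SievedValidChi (k : ℕ) (N : ℕ → ℕ) (χ : ℕ → Option ℕ) : Prop :=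
  (∀ i j α, χ i = some α → χ j = some α → i = j) ∧
  (∀ i α, χ i = some α → α < k) ∧
  (∀ i, χ i = none → N i ≤ 1) ∧
  (∀ i, N i = 0 → χ i = none)

/-- The sieved likelihood at truncation level `k`. -/
def sievedLik (k : ℕ) (φ : ℕ → ℝ) (n : ℕ) (N : ℕ → ℕ) : ℝ :=
  ∑' χ : {c : ℕ → Option ℕ // SievedValidChi k N c},
    (1 - ∑ α ∈ Finset.range k, φ α) ^ blobCount n N χ.1 *
      ∏ i ∈ Finset.range n, Option.elim (χ.1 i) 1 (fun α => φ α ^ N i)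

/-- A sieved maximum likelihood estimator at truncation level `k`. -/
def IsSievedMLE (k n : ℕ) (N : ℕ → ℕ) (θhat : ℕ → ℝ) : Prop :=
  IsSievedParam k θhat ∧
    ∀ φ, IsSievedParam k φ → sievedLik k φ n N ≤ sievedLik k θhat n N

/-- The species counts of the first `n` observations of the sequence `X`. -/
def counts {Ω : Type*} (X : ℕ → Ω → ℕ) (n : ℕ) (ω : Ω) (x : ℕ) : ℕ :=
  ((Finset.range n).filter fun i => X i ω = x).card

/-- The empirical probability mass function of the first `n` observations. -/
def empirical {Ω : Type*} (X : ℕ → Ω → ℕ) (n : ℕ) (ω : Ω) (x : ℕ) : ℝ :=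
  (counts X n ω x : ℝ) / n

/-- The nonincreasing rearrangement of a (finitely supported) sequence of
natural numbers: entry `j` is the `(j+1)`-st largest value. -/
def rearrangeNat (f : ℕ → ℕ) (j : ℕ) : ℕ :=
  sInf {t : ℕ | {m | t < f m}.Finite ∧ Nat.card {m | t < f m} ≤ j}

/-- The observed random partition of `n`: the sorted species counts of the
first `n` observations. -/
def samplePartition {Ω : Type*} (X : ℕ → Ω → ℕ) (n : ℕ) (ω : Ω) : ℕ → ℕ :=
  rearrangeNat (counts X n ω)

/-- The monotone (nonincreasing) rearrangement map `T` on nonnegative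
summable real sequences. -/
def rearrange (f : ℕ → ℝ) (j : ℕ) : ℝ :=
  sInf {t : ℝ | 0 ≤ t ∧ {m | t < f m}.Finite ∧ Nat.card {m | t < f m} ≤ j}

/-- The naive estimator `f̂⁽ⁿ⁾ = T(f⁽ⁿ⁾) = N/n`. -/
def naive {Ω : Type*} (X : ℕ → Ω → ℕ) (n : ℕ) (ω : Ω) : ℕ → ℝ :=
  rearrange (empirical X n ω)

/-- `X` is an i.i.d. sample from the probability mass function `θ` on `ℕ`
under the probability measure `P`. -/
def IsIIDSample {Ω : Type*} [MeasurableSpace Ω] (P : Measure Ω)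
    (θ : ℕ → ℝ) (X : ℕ → Ω → ℕ) : Prop :=
  (∀ i, Measurable (X i)) ∧
  (∀ i x, P {ω | X i ω = x} = ENNReal.ofReal (θ x)) ∧
  iIndepFun X P

/-- `I`, the number of species observed at least twice in the partition `N`. -/
def numRepeated (N : ℕ → ℕ) : ℕ := Nat.card {i | 2 ≤ N i}

/-- The estimator `f̌⁽ⁿ⁾` on the species observed at least twice (0-based:
entry `j` is the paper's `f̌⁽ⁿ⁾(j+1)`): `N_j / n` for `j < I` and `0` beyond. -/
def fcheck (n : ℕ) (N : ℕ → ℕ) (j : ℕ) : ℝ :=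
  if j < numRepeated N then (N j : ℝ) / n else 0

end Species

open Species

namespace SpeciesAux
open Species

/-! ### Rearrangement lemmas -/

lemma tsum_mem_rearrangeSet {f : ℕ → ℝ} (hf0 : ∀ x, 0 ≤ f x) (hf : Summable f) (j : ℕ) :
    (∑' x, f x) ∈ {t : ℝ | 0 ≤ t ∧ {m | t < f m}.Finite ∧ Nat.card {m | t < f m} ≤ j} := by
  have hempty : {m | (∑' x, f x) < f m} = ∅ := by
    ext m
    simp only [Set.mem_setOf_eq, Set.mem_empty_iff_false, iff_false, not_lt]
    exact Summable.le_tsum hf m fun _ _ => hf0 _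
  exact ⟨tsum_nonneg hf0, by simp [hempty], by simp [hempty]⟩

lemma rearrange_bddBelow (f : ℕ → ℝ) (j : ℕ) :
    BddBelow {t : ℝ | 0 ≤ t ∧ {m | t < f m}.Finite ∧ Nat.card {m | t < f m} ≤ j} :=
  ⟨0, fun _ ht => ht.1⟩

lemma rearrange_le_rearrange_add {f g : ℕ → ℝ}
    (hg0 : ∀ x, 0 ≤ g x) (hg : Summable g) {d : ℝ} (hd : 0 ≤ d)
    (h : ∀ x, f x ≤ g x + d) (j : ℕ) : rearrange f j ≤ rearrange g j + d := by
  have hne : {t : ℝ | 0 ≤ t ∧ {m | t < g m}.Finite ∧ Nat.card {m | t < g m} ≤ j}.Nonempty :=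
    ⟨_, tsum_mem_rearrangeSet hg0 hg j⟩
  have key : ∀ t ∈ {t : ℝ | 0 ≤ t ∧ {m | t < g m}.Finite ∧ Nat.card {m | t < g m} ≤ j},
      rearrange f j - d ≤ t := by
    intro t ht
    have hsub : {m | t + d < f m} ⊆ {m | t < g m} := by
      intro m hm
      simp only [Set.mem_setOf_eq] at hm ⊢
      have := h m
      linarith
    have hle : rearrange f j ≤ t + d := by
      apply csInf_le (rearrange_bddBelow f j)
      exact ⟨by linarith [ht.1], ht.2.1.subset hsub,
        le_trans (Nat.card_mono ht.2.1 hsub) ht.2.2⟩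
    linarith
  have h2 : rearrange f j - d ≤ rearrange g j := le_csInf hne key
  linarith

lemma rearrange_antitone_eq {θ : ℕ → ℝ} (h0 : ∀ x, 0 ≤ θ x) (hm : Antitone θ)
    (hsum : Summable θ) (j : ℕ) : rearrange θ j = θ j := by
  apply le_antisymm
  · apply csInf_le (rearrange_bddBelow θ j)
    have hsub : {m | θ j < θ m} ⊆ Set.Iio j := by
      intro m hm'
      simp only [Set.mem_setOf_eq] at hm'
      simp only [Set.mem_Iio]
      by_contra hmj
      push_neg at hmj
      exact absurd (hm hmj) (not_le.mpr hm')
    refine ⟨h0 j, (Set.finite_Iio j).subset hsub, ?_⟩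
    calc Nat.card {m | θ j < θ m} ≤ Nat.card (Set.Iio j) :=
          Nat.card_mono (Set.finite_Iio j) hsub
      _ = j := by
          rw [Nat.card_coe_set_eq, ← Finset.coe_range, Set.ncard_coe_finset, Finset.card_range]
  · refine le_csInf ⟨_, tsum_mem_rearrangeSet h0 hsum j⟩ ?_
    rintro t ⟨ht0, htfin, htcard⟩
    by_contra hlt
    push_neg at hlt
    have hsub : Set.Iio (j+1) ⊆ {m | t < θ m} := by
      intro m hm'
      simp only [Set.mem_Iio] at hm'
      exact lt_of_lt_of_le hlt (hm (Nat.lt_succ_iff.mp hm'))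
    have hcard : j + 1 ≤ Nat.card {m | t < θ m} := by
      have h1 : Nat.card (Set.Iio (j+1)) = j + 1 := by
        rw [Nat.card_coe_set_eq, ← Finset.coe_range, Set.ncard_coe_finset, Finset.card_range]
      rw [← h1]
      exact Nat.card_mono htfin hsub
    omega

lemma abs_rearrange_sub_le {θ : ℕ → ℝ} (h0 : ∀ x, 0 ≤ θ x) (hm : Antitone θ)
    (hsum : Summable θ) {f : ℕ → ℝ} (hf0 : ∀ x, 0 ≤ f x) (hf : Summable f)
    {d : ℝ} (hd : 0 ≤ d) (h : ∀ x, |f x - θ x| ≤ d) (j : ℕ) :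
    |rearrange f j - θ j| ≤ d := by
  have h1 : rearrange f j ≤ rearrange θ j + d :=
    rearrange_le_rearrange_add h0 hsum hd (fun x => by have := abs_le.1 (h x); linarith) j
  have h2 : rearrange θ j ≤ rearrange f j + d :=
    rearrange_le_rearrange_add hf0 hf hd (fun x => by have := abs_le.1 (h x); linarith) j
  rw [rearrange_antitone_eq h0 hm hsum j] at h1 h2
  rw [abs_le]
  constructor <;> linarith

/-! ### Grid lemma -/

def cdfGrid (G : ℕ → ℝ) (t : ℝ) : Finset ℕ :=
  ((Finset.range (⌈1/t⌉₊ + 1)).image fun r : ℕ => sSup {j | G j ≤ (r : ℝ) * t}) ∪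
    ((Finset.range (⌈1/t⌉₊ + 1)).image fun r : ℕ => sInf {j | (r : ℝ) * t ≤ G j})

lemma grid_bound {G F : ℕ → ℝ} {t : ℝ} (ht : 0 < t)
    (hGmono : Monotone G) (hG0 : ∀ k, 0 ≤ G k) (hG1 : Tendsto G atTop (𝓝 1))
    (hFmono : Monotone F) (hF0 : ∀ k, 0 ≤ F k) (hF1 : ∀ k, F k ≤ 1)
    (hgrid : ∀ s ∈ cdfGrid G t, |F s - G s| ≤ t) (k : ℕ) : |F k - G k| ≤ 2 * t := by
  have hGle1 : ∀ j, G j ≤ 1 := fun j => hGmono.ge_of_tendsto hG1 j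
  rw [abs_le]
  constructor
  · -- G k - F k ≤ 2t
    rw [neg_le, neg_sub]
    by_cases hc : G k < t
    · have := hF0 k; linarith
    push_neg at hc
    set r := ⌊G k / t⌋₊ with hr
    have hrt_le : (r : ℝ) * t ≤ G k := by
      have h1 := Nat.floor_le (div_nonneg (hG0 k) ht.le)
      calc (r : ℝ) * t ≤ (G k / t) * t := by nlinarith
        _ = G k := div_mul_cancel₀ _ ht.ne'
    have hrle : r ≤ ⌈1/t⌉₊ := by
      have h1 : G k / t ≤ 1 / t := by gcongr; exact hGle1 k
      exact le_trans (Nat.floor_mono h1) (Nat.floor_le_ceil _)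
    have hkB : k ∈ {j | (r : ℝ) * t ≤ G j} := hrt_le
    have hmB : sInf {j | (r : ℝ) * t ≤ G j} ∈ {j | (r : ℝ) * t ≤ G j} := Nat.sInf_mem ⟨k, hkB⟩
    have hmk : sInf {j | (r : ℝ) * t ≤ G j} ≤ k := Nat.sInf_le hkB
    have hmem : sInf {j | (r : ℝ) * t ≤ G j} ∈ cdfGrid G t :=
      Finset.mem_union_right _ (Finset.mem_image.2 ⟨r, Finset.mem_range.2 (Nat.lt_succ_of_le hrle), rfl⟩)
    have h1 := abs_le.1 (hgrid _ hmem)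
    have h2 : G k < (r : ℝ) * t + t := by
      have h3 := Nat.lt_floor_add_one (G k / t)
      have h4 : G k / t * t = G k := div_mul_cancel₀ _ ht.ne'
      nlinarith
    have h3 : F (sInf {j | (r : ℝ) * t ≤ G j}) ≤ F k := hFmono hmk
    have h4 : (r : ℝ) * t ≤ G (sInf {j | (r : ℝ) * t ≤ G j}) := hmB
    linarith
  · -- F k - G k ≤ 2t
    by_cases hc : 1 - t < G k
    · have := hF1 k; linarith
    push_neg at hc
    set r := ⌈G k / t⌉₊ with hr
    have h1 : G k ≤ (r : ℝ) * t := by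
      have h2 := Nat.le_ceil (G k / t)
      calc G k = (G k / t) * t := (div_mul_cancel₀ _ ht.ne').symm
        _ ≤ (r : ℝ) * t := by nlinarith
    have hrle : r ≤ ⌈1/t⌉₊ := by
      apply Nat.ceil_mono
      gcongr
      exact hGle1 k
    have hlow : ∀ hr1 : 1 ≤ r, ((r : ℝ) - 1) * t < G k := by
      intro hr1
      have h5 : (r - 1 : ℕ) < ⌈G k / t⌉₊ := by omega
      have h6 : ((r - 1 : ℕ) : ℝ) < G k / t := Nat.lt_ceil.mp h5
      have h7 : ((r - 1 : ℕ) : ℝ) = (r : ℝ) - 1 := by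
        push_cast [Nat.cast_sub hr1]; ring
      rw [h7] at h6
      calc ((r : ℝ) - 1) * t < (G k / t) * t := by nlinarith
        _ = G k := div_mul_cancel₀ _ ht.ne'
    have hrt1 : (r : ℝ) * t < 1 := by
      rcases Nat.eq_zero_or_pos r with h0 | hpos
      · rw [h0]; simpa using one_pos
      · have := hlow hpos; linarith
    have hbddA : BddAbove {j | G j ≤ (r : ℝ) * t} := by
      have hev : ∀ᶠ j in atTop, (r : ℝ) * t < G j := hG1.eventually (eventually_gt_nhds hrt1)
      obtain ⟨M, hM⟩ := eventually_atTop.1 hev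
      refine ⟨M, fun j hj => ?_⟩
      by_contra hjM
      push_neg at hjM
      exact absurd (hM j hjM.le) (not_lt.mpr hj)
    have hkA : k ∈ {j | G j ≤ (r : ℝ) * t} := h1
    have hmA : sSup {j | G j ≤ (r : ℝ) * t} ∈ {j | G j ≤ (r : ℝ) * t} :=
      Nat.sSup_mem ⟨k, hkA⟩ hbddA
    have hkm : k ≤ sSup {j | G j ≤ (r : ℝ) * t} := le_csSup hbddA hkA
    have hmem : sSup {j | G j ≤ (r : ℝ) * t} ∈ cdfGrid G t :=
      Finset.mem_union_left _ (Finset.mem_image.2 ⟨r, Finset.mem_range.2 (Nat.lt_succ_of_le hrle), rfl⟩)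
    have h5 := abs_le.1 (hgrid _ hmem)
    have h6 : (r : ℝ) * t ≤ G k + t := by
      rcases Nat.eq_zero_or_pos r with h0 | hpos
      · rw [h0]; simpa using by linarith [hG0 k]
      · have := hlow hpos; nlinarith
    have h7 : F k ≤ F (sSup {j | G j ≤ (r : ℝ) * t}) := hFmono hkm
    have h8 : G (sSup {j | G j ≤ (r : ℝ) * t}) ≤ (r : ℝ) * t := hmA
    linarith

lemma cdfGrid_card (G : ℕ → ℝ) (t : ℝ) : (cdfGrid G t).card ≤ 2 * (⌈1/t⌉₊ + 1) := by
  refine le_trans (Finset.card_union_le _ _) ?_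
  have h1 := Finset.card_image_le (s := Finset.range (⌈1/t⌉₊ + 1))
    (f := fun r => sSup {j | G j ≤ (r : ℝ) * t})
  have h2 := Finset.card_image_le (s := Finset.range (⌈1/t⌉₊ + 1))
    (f := fun r => sInf {j | (r : ℝ) * t ≤ G j})
  simp only [Finset.card_range] at h1 h2
  omega


/-! ### Concentration -/

lemma exp_le_one_add_self_add_sq {x : ℝ} (hx : |x| ≤ 1) : Real.exp x ≤ 1 + x + x ^ 2 := by
  have h := Real.exp_bound hx (by norm_num : 0 < 2)
  have h2 : ∑ m ∈ Finset.range 2, x ^ m / m.factorial = 1 + x := by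
    simp [Finset.sum_range_succ]
  rw [h2] at h
  have h3 := (abs_le.1 h).2
  norm_num at h3
  nlinarith [sq_abs x, sq_nonneg x]

lemma integrable_of_abs_le {Ω : Type*} [MeasurableSpace Ω] {P : Measure Ω}
    [IsProbabilityMeasure P] {f : Ω → ℝ} (hf : Measurable f) {C : ℝ}
    (h : ∀ ω, |f ω| ≤ C) : Integrable f P :=
  (integrable_const C).mono' hf.aestronglyMeasurable (ae_of_all _ fun ω => by
    simpa using h ω)

lemma mgf_le_of_bounded {Ω : Type*} [MeasurableSpace Ω] {P : Measure Ω}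
    [IsProbabilityMeasure P] {Z : Ω → ℝ} (hmeas : Measurable Z)
    (hbdd : ∀ ω, |Z ω| ≤ 1) (hmean : ∫ ω, Z ω ∂P = 0) {t : ℝ} (ht : |t| ≤ 1) :
    mgf Z P t ≤ Real.exp (t ^ 2) := by
  have hint1 : Integrable Z P := integrable_of_abs_le hmeas hbdd
  have hZsq : ∀ ω, |Z ω ^ 2| ≤ 1 := fun ω => by
    rw [abs_of_nonneg (sq_nonneg _)]
    nlinarith [sq_abs (Z ω), hbdd ω, abs_nonneg (Z ω)]
  have hint2 : Integrable (fun ω => Z ω ^ 2) P :=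
    integrable_of_abs_le (hmeas.pow_const 2) hZsq
  have hintexp : Integrable (fun ω => Real.exp (t * Z ω)) P := by
    apply integrable_of_abs_le ((hmeas.const_mul t).exp) (C := Real.exp 1)
    intro ω
    rw [abs_of_pos (Real.exp_pos _)]
    apply Real.exp_le_exp.2
    calc t * Z ω ≤ |t * Z ω| := le_abs_self _
      _ ≤ 1 := by rw [abs_mul]; nlinarith [abs_nonneg t, abs_nonneg (Z ω), hbdd ω]
  have hptw : ∀ ω, Real.exp (t * Z ω) ≤ 1 + t * Z ω + t ^ 2 * Z ω ^ 2 := fun ω => by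
    have habs : |t * Z ω| ≤ 1 := by
      rw [abs_mul]; nlinarith [abs_nonneg t, abs_nonneg (Z ω), hbdd ω]
    calc Real.exp (t * Z ω) ≤ 1 + t * Z ω + (t * Z ω) ^ 2 :=
        exp_le_one_add_self_add_sq habs
      _ = 1 + t * Z ω + t ^ 2 * Z ω ^ 2 := by ring
  have hintrhs : Integrable (fun ω => 1 + t * Z ω + t ^ 2 * Z ω ^ 2) P :=
    ((integrable_const 1).add (hint1.const_mul t)).add (hint2.const_mul (t ^ 2))
  have hle : mgf Z P t ≤ ∫ ω, (1 + t * Z ω + t ^ 2 * Z ω ^ 2) ∂P :=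
    integral_mono hintexp hintrhs hptw
  have hsq_le : ∫ ω, Z ω ^ 2 ∂P ≤ 1 := by
    calc ∫ ω, Z ω ^ 2 ∂P ≤ ∫ _ω, (1 : ℝ) ∂P :=
        integral_mono hint2 (integrable_const 1)
          (fun ω => by nlinarith [sq_abs (Z ω), hbdd ω, abs_nonneg (Z ω)])
      _ = 1 := by simp
  have hA : Integrable (fun ω => 1 + t * Z ω) P := (integrable_const 1).add (hint1.const_mul t)
  have hB : Integrable (fun ω => t ^ 2 * Z ω ^ 2) P := hint2.const_mul _
  have hC : Integrable (fun ω => t * Z ω) P := hint1.const_mul t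
  rw [integral_add hA hB, integral_add (integrable_const 1) hC, integral_const,
    integral_const_mul, integral_const_mul, hmean] at hle
  simp only [probReal_univ, measure_univ, ENNReal.toReal_one, smul_eq_mul, mul_one, mul_zero, add_zero] at hle
  nlinarith [Real.add_one_le_exp (t ^ 2), sq_nonneg t]

lemma tail_bound {Ω : Type*} [MeasurableSpace Ω] (P : Measure Ω) [IsProbabilityMeasure P]
    (Z : ℕ → Ω → ℝ) (hmeas : ∀ i, Measurable (Z i))
    (hindep : iIndepFun Z P)
    (hbdd : ∀ i ω, |Z i ω| ≤ 1) (hmean : ∀ i, ∫ ω, Z i ω ∂P = 0)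
    (n : ℕ) {u : ℝ} (hu : 0 < u) (hu1 : u ≤ 1) :
    P {ω | (n : ℝ) * u ≤ ∑ i ∈ Finset.range n, Z i ω} ≤
      ENNReal.ofReal (Real.exp (-((n : ℝ) * u ^ 2) / 4)) := by
  set t : ℝ := u / 2 with htdef
  have ht0 : 0 ≤ t := by positivity
  have ht1 : |t| ≤ 1 := by rw [abs_of_nonneg ht0]; simp only [htdef]; linarith
  have hSmeas : Measurable (fun ω => ∑ i ∈ Finset.range n, Z i ω) :=
    Finset.measurable_sum _ fun i _ => hmeas i
  have hSint : Integrable (fun ω => Real.exp (t * ∑ i ∈ Finset.range n, Z i ω)) P := by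
    apply integrable_of_abs_le ((hSmeas.const_mul t).exp) (C := Real.exp (t * n))
    intro ω
    rw [abs_of_pos (Real.exp_pos _)]
    apply Real.exp_le_exp.2
    apply mul_le_mul_of_nonneg_left ?_ ht0
    calc (∑ i ∈ Finset.range n, Z i ω) ≤ ∑ i ∈ Finset.range n, 1 :=
        Finset.sum_le_sum fun i _ => le_trans (le_abs_self _) (hbdd i ω)
      _ = n := by simp
  have hch := measure_ge_le_exp_mul_mgf (μ := P)
    (X := fun ω => ∑ i ∈ Finset.range n, Z i ω) ((n : ℝ) * u) ht0 hSint
  have hmgf : mgf (fun ω => ∑ i ∈ Finset.range n, Z i ω) P t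
      = ∏ i ∈ Finset.range n, mgf (Z i) P t := by
    rw [show (fun ω => ∑ i ∈ Finset.range n, Z i ω) = (∑ i ∈ Finset.range n, Z i) by
      funext ω; simp]
    exact hindep.mgf_sum hmeas _
  rw [hmgf] at hch
  have hprod : ∏ i ∈ Finset.range n, mgf (Z i) P t ≤ Real.exp (t ^ 2) ^ n := by
    calc ∏ i ∈ Finset.range n, mgf (Z i) P t
        ≤ ∏ _i ∈ Finset.range n, Real.exp (t ^ 2) :=
        Finset.prod_le_prod (fun i _ => mgf_nonneg)
          (fun i _ => mgf_le_of_bounded (hmeas i) (hbdd i) (hmean i) ht1)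
      _ = Real.exp (t ^ 2) ^ n := by rw [Finset.prod_const, Finset.card_range]
  have hfinal : (P {ω | (n : ℝ) * u ≤ ∑ i ∈ Finset.range n, Z i ω}).toReal
      ≤ Real.exp (-((n : ℝ) * u ^ 2) / 4) := by
    refine le_trans hch ?_
    calc Real.exp (-t * ((n : ℝ) * u)) * ∏ i ∈ Finset.range n, mgf (Z i) P t
        ≤ Real.exp (-t * ((n : ℝ) * u)) * Real.exp (t ^ 2) ^ n :=
        mul_le_mul_of_nonneg_left hprod (Real.exp_pos _).le
      _ = Real.exp (-t * ((n : ℝ) * u) + (n : ℝ) * t ^ 2) := by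
        rw [← Real.exp_nat_mul, ← Real.exp_add]
      _ = Real.exp (-((n : ℝ) * u ^ 2) / 4) := by
        congr 1; simp only [htdef]; ring
  rw [ENNReal.le_ofReal_iff_toReal_le (measure_ne_top _ _) (Real.exp_pos _).le]
  exact hfinal

/-! ### Summability -/

lemma summable_mul_exp_neg_rpow {c q : ℝ} (hc : 0 < c) (hq : 0 < q) :
    Summable (fun n : ℕ => (n : ℝ) * Real.exp (-(c * (n : ℝ) ^ q))) := by
  have h3q : Tendsto (fun x : ℝ => x ^ ((3 : ℝ) / q) * Real.exp (-c * x)) atTop (𝓝 0) :=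
    tendsto_rpow_mul_exp_neg_mul_atTop_nhds_zero _ c hc
  have hcomp : Tendsto (fun n : ℕ => (n : ℝ) ^ q) atTop atTop :=
    (tendsto_rpow_atTop hq).comp tendsto_natCast_atTop_atTop
  have h := h3q.comp hcomp
  have heq : (fun n : ℕ => ((n : ℝ) ^ q) ^ ((3 : ℝ) / q) * Real.exp (-c * (n : ℝ) ^ q))
      =ᶠ[atTop] (fun n : ℕ => (n : ℝ) ^ (3 : ℝ) * Real.exp (-(c * (n : ℝ) ^ q))) := by
    filter_upwards with n
    rw [← Real.rpow_mul (by positivity)]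
    congr 2
    · field_simp
    · ring
  have h2 : Tendsto (fun n : ℕ => (n : ℝ) ^ (3 : ℝ) * Real.exp (-(c * (n : ℝ) ^ q)))
      atTop (𝓝 0) := h.congr' heq
  apply summable_of_isBigO_nat (Real.summable_nat_rpow.mpr (by norm_num : (-2 : ℝ) < -1))
  apply Asymptotics.IsBigO.of_bound 1
  filter_upwards [h2.eventually (eventually_le_nhds one_pos), eventually_ge_atTop 1]
    with n hn hn1
  have hnpos : (0 : ℝ) < n := by exact_mod_cast hn1
  rw [Real.norm_eq_abs, Real.norm_eq_abs, abs_of_nonneg (by positivity),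
    abs_of_nonneg (Real.rpow_nonneg hnpos.le (-2 : ℝ)), one_mul]
  have hsplit : (n : ℝ) * Real.exp (-(c * (n : ℝ) ^ q))
      = (n : ℝ) ^ (-2 : ℝ) * ((n : ℝ) ^ (3 : ℝ) * Real.exp (-(c * (n : ℝ) ^ q))) := by
    rw [← mul_assoc, ← Real.rpow_add hnpos]
    norm_num
  rw [hsplit]
  exact mul_le_of_le_one_right (Real.rpow_nonneg hnpos.le _) hn

end SpeciesAux

open SpeciesAux


set_option maxHeartbeats 4000000 in
theorem statement11 {Ω : Type*} [MeasurableSpace Ω] (P : Measure Ω)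
    [IsProbabilityMeasure P] (θ : ℕ → ℝ) (hθ : IsOrderedPMF θ)
    (X : ℕ → Ω → ℕ) (hX : IsIIDSample P θ X) :
    ∀ δ : ℝ, 0 < δ →
      ∀ᵐ ω ∂P,
        Tendsto (fun n : ℕ =>
            (n : ℝ) ^ ((1 : ℝ) / 2 - δ) * ⨆ x : ℕ, |naive X n ω x - θ x|)
          atTop (𝓝 0) := by
  obtain ⟨hθ0, hθanti, hθsum, hθtsum⟩ := hθ
  obtain ⟨hXmeas, hXlaw, hXindep⟩ := hX
  intro δ hδ
  set δ' : ℝ := min δ (1/4) with hδ'def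
  have hδ'pos : 0 < δ' := lt_min hδ (by norm_num)
  have hδ'le : δ' ≤ 1/4 := min_le_right _ _
  have hδ'δ : δ' ≤ δ := min_le_left _ _
  -- the true CDF
  set Gc : ℕ → ℝ := fun s => ∑ x ∈ Finset.range (s + 1), θ x with hGcdef
  have hGc0 : ∀ s, 0 ≤ Gc s := fun s => Finset.sum_nonneg fun x _ => hθ0 x
  have hGc1 : ∀ s, Gc s ≤ 1 := fun s => by
    rw [← hθtsum]; exact Summable.sum_le_tsum _ (fun x _ => hθ0 x) hθsum
  have hGcmono : Monotone Gc := fun a b hab =>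
    Finset.sum_le_sum_of_subset_of_nonneg (Finset.range_subset_range.2 (by omega))
      (fun x _ _ => hθ0 x)
  have hGctend : Tendsto Gc atTop (𝓝 1) := by
    have h1 := hθsum.hasSum.tendsto_sum_nat
    rw [hθtsum] at h1
    exact h1.comp (tendsto_add_atTop_nat 1)
  -- the law of the observations
  have hlaw_le : ∀ i s, P {ω | X i ω ≤ s} = ENNReal.ofReal (Gc s) := by
    intro i s
    have hset : {ω | X i ω ≤ s} = ⋃ x ∈ Finset.range (s + 1), {ω | X i ω = x} := by
      ext ω; simp [Nat.lt_succ_iff]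
    have hd : (↑(Finset.range (s + 1)) : Set ℕ).PairwiseDisjoint
        (fun x => {ω | X i ω = x}) := by
      intro a _ b _ hab
      exact Set.disjoint_left.mpr fun ω h1 h2 => hab (h1.symm.trans h2)
    have hm : ∀ x ∈ Finset.range (s + 1), MeasurableSet {ω | X i ω = x} := fun x _ =>
      hXmeas i (measurableSet_singleton x)
    rw [hset, measure_biUnion_finset hd hm]
    simp only [hXlaw]
    rw [← ENNReal.ofReal_sum_of_nonneg (fun x _ => hθ0 x)]
  -- empirical facts
  have hemp0 : ∀ n ω x, 0 ≤ empirical X n ω x := fun n ω x =>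
    div_nonneg (Nat.cast_nonneg _) (Nat.cast_nonneg _)
  have hempsummable : ∀ n ω, Summable (empirical X n ω) := by
    intro n ω
    apply summable_of_ne_finset_zero (s := (Finset.range n).image fun i => X i ω)
    intro x hx
    have hc : counts X n ω x = 0 := by
      rw [counts, Finset.card_eq_zero, Finset.filter_eq_empty_iff]
      intro i hi hxi
      exact hx (Finset.mem_image.2 ⟨i, hi, hxi⟩)
    simp [empirical, hc]
  have hcountsum : ∀ n ω k, ∑ x ∈ Finset.range (k + 1), counts X n ω x
      = ∑ i ∈ Finset.range n, (if X i ω ≤ k then 1 else 0) := by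
    intro n ω k
    simp only [counts, Finset.card_filter]
    rw [Finset.sum_comm]
    refine Finset.sum_congr rfl fun i _ => ?_
    rw [Finset.sum_ite_eq (Finset.range (k + 1)) (X i ω) (fun _ => 1)]
    simp [Nat.lt_succ_iff]
  set eF : ℕ → Ω → ℕ → ℝ := fun n ω k => ∑ x ∈ Finset.range (k + 1), empirical X n ω x
    with heFdef
  have heFind : ∀ n ω k, eF n ω k
      = (∑ i ∈ Finset.range n, (if X i ω ≤ k then (1:ℝ) else 0)) / n := by
    intro n ω k
    simp only [heFdef, empirical]
    rw [← Finset.sum_div]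
    congr 1
    have h1 : ∑ x ∈ Finset.range (k + 1), ((counts X n ω x : ℕ) : ℝ)
        = ((∑ x ∈ Finset.range (k + 1), counts X n ω x : ℕ) : ℝ) := by push_cast; rfl
    rw [h1, hcountsum n ω k, Nat.cast_sum]
    refine Finset.sum_congr rfl fun i _ => ?_
    split <;> simp
  have heF0 : ∀ n ω k, 0 ≤ eF n ω k := fun n ω k =>
    Finset.sum_nonneg fun x _ => hemp0 n ω x
  have heFmono : ∀ n ω, Monotone (eF n ω) := by
    intro n ω a b hab
    simp only [heFdef]
    exact Finset.sum_le_sum_of_subset_of_nonneg (Finset.range_subset_range.2 (by omega))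
      fun x _ _ => hemp0 n ω x
  have heF1 : ∀ n ω k, eF n ω k ≤ 1 := by
    intro n ω k
    rw [heFind n ω k]
    apply div_le_one_of_le₀
    · calc ∑ i ∈ Finset.range n, (if X i ω ≤ k then (1:ℝ) else 0)
          ≤ ∑ _i ∈ Finset.range n, (1:ℝ) :=
          Finset.sum_le_sum fun i _ => by split <;> norm_num
        _ = n := by simp
    · exact Nat.cast_nonneg n
  have hemp_bound : ∀ n ω (d : ℝ), (∀ k, |eF n ω k - Gc k| ≤ d) →
      ∀ x, |empirical X n ω x - θ x| ≤ 2 * d := by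
    intro n ω d hd x
    have hdnn : 0 ≤ d := le_trans (abs_nonneg _) (hd 0)
    cases x with
    | zero =>
      have h0 : empirical X n ω 0 = eF n ω 0 := by simp [heFdef]
      have h1 : θ 0 = Gc 0 := by simp [hGcdef]
      rw [h0, h1]
      have h2 := abs_le.1 (hd 0)
      rw [abs_le]; constructor <;> linarith
    | succ m =>
      have h0 : empirical X n ω (m + 1) = eF n ω (m + 1) - eF n ω m := by
        simp [heFdef, Finset.sum_range_succ]
      have h1 : θ (m + 1) = Gc (m + 1) - Gc m := by
        simp [hGcdef, Finset.sum_range_succ]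
      rw [h0, h1]
      have ha := abs_le.1 (hd (m + 1))
      have hb := abs_le.1 (hd m)
      rw [abs_le]; constructor <;> linarith
  -- tail bound for a single CDF point
  have htail : ∀ (s : ℕ) (u : ℝ), 0 < u → u ≤ 1 → ∀ n : ℕ, 1 ≤ n →
      P {ω | u < |eF n ω s - Gc s|} ≤
        2 * ENNReal.ofReal (Real.exp (-((n : ℝ) * u ^ 2) / 4)) := by
    intro s u hu hu1 n hn
    have hGs0 := hGc0 s
    have hGs1 := hGc1 s
    set ZU : ℕ → Ω → ℝ := fun i ω => (if X i ω ≤ s then (1:ℝ) else 0) - Gc s with hZU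
    set ZL : ℕ → Ω → ℝ := fun i ω => Gc s - (if X i ω ≤ s then (1:ℝ) else 0) with hZL
    have hind_meas : ∀ i, Measurable (fun ω => (if X i ω ≤ s then (1:ℝ) else 0)) :=
      fun i => Measurable.comp (measurable_from_top (f := fun v : ℕ => (if v ≤ s then (1:ℝ) else 0))) (hXmeas i)
    have hZUmeas : ∀ i, Measurable (ZU i) := fun i => (hind_meas i).sub measurable_const
    have hZLmeas : ∀ i, Measurable (ZL i) := fun i => measurable_const.sub (hind_meas i)
    have hZUindep : iIndepFun ZU P := by
      rw [hZU]
      exact hXindep.comp (fun _ => fun v : ℕ => (if v ≤ s then (1:ℝ) else 0) - Gc s)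
        (fun i => measurable_from_top)
    have hZLindep : iIndepFun ZL P := by
      rw [hZL]
      exact hXindep.comp (fun _ => fun v : ℕ => Gc s - (if v ≤ s then (1:ℝ) else 0))
        (fun i => measurable_from_top)
    have hZUbdd : ∀ i ω, |ZU i ω| ≤ 1 := by
      intro i ω
      simp only [hZU]
      split <;> (rw [abs_le]; constructor <;> linarith)
    have hZLbdd : ∀ i ω, |ZL i ω| ≤ 1 := by
      intro i ω
      simp only [hZL]
      split <;> (rw [abs_le]; constructor <;> linarith)
    have hindint : ∀ i, Integrable (fun ω => (if X i ω ≤ s then (1:ℝ) else 0)) P :=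
      fun i => SpeciesAux.integrable_of_abs_le (hind_meas i) (C := 1)
        fun ω => by split <;> norm_num
    have hindval : ∀ i, ∫ ω, (if X i ω ≤ s then (1:ℝ) else 0) ∂P = Gc s := by
      intro i
      have hseq : (fun ω => if X i ω ≤ s then (1:ℝ) else 0)
          = Set.indicator {ω | X i ω ≤ s} (fun _ => 1) := by
        ext ω
        rw [Set.indicator_apply]
        simp [Set.mem_setOf_eq]
      have hms : MeasurableSet {ω | X i ω ≤ s} := hXmeas i (show MeasurableSet (Set.Iic s) from trivial)
      rw [hseq, integral_indicator_const _ hms, measureReal_def, hlaw_le i s]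
      simp [ENNReal.toReal_ofReal hGs0]
    have hZUmean : ∀ i, ∫ ω, ZU i ω ∂P = 0 := by
      intro i
      simp only [hZU]
      rw [integral_sub (hindint i) (integrable_const _), hindval i, integral_const]
      simp
    have hZLmean : ∀ i, ∫ ω, ZL i ω ∂P = 0 := by
      intro i
      simp only [hZL]
      rw [integral_sub (integrable_const _) (hindint i), hindval i, integral_const]
      simp
    have hnpos : (0:ℝ) < n := by exact_mod_cast hn
    have hne : (n:ℝ) ≠ 0 := hnpos.ne'
    have hsub : {ω | u < |eF n ω s - Gc s|} ⊆
        {ω | (n:ℝ) * u ≤ ∑ i ∈ Finset.range n, ZU i ω} ∪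
          {ω | (n:ℝ) * u ≤ ∑ i ∈ Finset.range n, ZL i ω} := by
      intro ω hω
      simp only [Set.mem_setOf_eq] at hω
      have hsumZU : ∑ i ∈ Finset.range n, ZU i ω = (n:ℝ) * (eF n ω s - Gc s) := by
        simp only [hZU]
        rw [Finset.sum_sub_distrib, Finset.sum_const, Finset.card_range, nsmul_eq_mul,
          heFind n ω s]
        field_simp
        try ring
      have hsumZL : ∑ i ∈ Finset.range n, ZL i ω = (n:ℝ) * (Gc s - eF n ω s) := by
        simp only [hZL]
        rw [Finset.sum_sub_distrib, Finset.sum_const, Finset.card_range, nsmul_eq_mul,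
          heFind n ω s]
        field_simp
        try ring
      rcases lt_abs.1 hω with h | h
      · left
        simp only [Set.mem_setOf_eq]
        rw [hsumZU]
        nlinarith
      · right
        simp only [Set.mem_setOf_eq]
        rw [hsumZL]
        nlinarith
    calc P {ω | u < |eF n ω s - Gc s|}
        ≤ P ({ω | (n:ℝ) * u ≤ ∑ i ∈ Finset.range n, ZU i ω} ∪
            {ω | (n:ℝ) * u ≤ ∑ i ∈ Finset.range n, ZL i ω}) := measure_mono hsub
      _ ≤ P {ω | (n:ℝ) * u ≤ ∑ i ∈ Finset.range n, ZU i ω} +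
          P {ω | (n:ℝ) * u ≤ ∑ i ∈ Finset.range n, ZL i ω} := measure_union_le _ _
      _ ≤ ENNReal.ofReal (Real.exp (-((n : ℝ) * u ^ 2) / 4)) +
          ENNReal.ofReal (Real.exp (-((n : ℝ) * u ^ 2) / 4)) :=
          add_le_add
            (SpeciesAux.tail_bound P ZU hZUmeas hZUindep hZUbdd hZUmean n hu hu1)
            (SpeciesAux.tail_bound P ZL hZLmeas hZLindep hZLbdd hZLmean n hu hu1)
      _ = 2 * ENNReal.ofReal (Real.exp (-((n : ℝ) * u ^ 2) / 4)) := (two_mul _).symm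
  -- the key almost-sure eventual bound, for each m
  have key : ∀ m : ℕ, ∀ᵐ ω ∂P, ∀ᶠ n : ℕ in atTop,
      (⨆ x, |naive X n ω x - θ x|) ≤ 4 * ((1:ℝ)/((m:ℝ)+1)) * (n:ℝ) ^ (δ' - 1/2) := by
    intro m
    set ε : ℝ := 1/((m:ℝ)+1) with hε
    have hεpos : 0 < ε := by positivity
    have hεle1 : ε ≤ 1 := by
      rw [hε, div_le_one (by positivity)]
      have : (0:ℝ) ≤ (m:ℝ) := Nat.cast_nonneg m
      linarith
    set tv : ℕ → ℝ := fun n => ε * (n:ℝ) ^ (δ' - 1/2) with htv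
    have htvpos : ∀ n : ℕ, 1 ≤ n → 0 < tv n := by
      intro n hn
      have hnp : (0:ℝ) < n := by exact_mod_cast hn
      simp only [htv]
      positivity
    have htvle1 : ∀ n : ℕ, 1 ≤ n → tv n ≤ 1 := by
      intro n hn
      have h1n : (1:ℝ) ≤ n := by exact_mod_cast hn
      have h2 : (n:ℝ) ^ (δ' - 1/2) ≤ 1 :=
        Real.rpow_le_one_of_one_le_of_nonpos h1n (by linarith)
      have h3 : (0:ℝ) ≤ (n:ℝ) ^ (δ' - 1/2) := Real.rpow_nonneg (by linarith) _
      simp only [htv]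
      nlinarith
    set Bad : ℕ → Set Ω := fun n =>
      ⋃ s ∈ SpeciesAux.cdfGrid Gc (tv n), {ω | tv n < |eF n ω s - Gc s|} with hBad
    have hPBad : ∀ n : ℕ, 1 ≤ n → P (Bad n) ≤
        ENNReal.ofReal (((2 * (⌈1/tv n⌉₊ + 1) : ℕ) : ℝ) *
          (2 * Real.exp (-((n:ℝ) * tv n ^ 2) / 4))) := by
      intro n hn
      have hcast : ENNReal.ofReal (((2 * (⌈1/tv n⌉₊ + 1) : ℕ) : ℝ) *
          (2 * Real.exp (-((n:ℝ) * tv n ^ 2) / 4)))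
          = ((2 * (⌈1/tv n⌉₊ + 1) : ℕ) : ENNReal) *
            (2 * ENNReal.ofReal (Real.exp (-((n:ℝ) * tv n ^ 2) / 4))) := by
        rw [ENNReal.ofReal_mul (Nat.cast_nonneg _),
          ENNReal.ofReal_mul (by norm_num : (0:ℝ) ≤ 2), ENNReal.ofReal_natCast,
          ENNReal.ofReal_ofNat]
      rw [hcast]
      calc P (Bad n)
          ≤ ∑ s ∈ SpeciesAux.cdfGrid Gc (tv n), P {ω | tv n < |eF n ω s - Gc s|} := by
            rw [hBad]; exact measure_biUnion_finset_le _ _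
        _ ≤ ∑ _s ∈ SpeciesAux.cdfGrid Gc (tv n),
            2 * ENNReal.ofReal (Real.exp (-((n:ℝ) * tv n ^ 2) / 4)) :=
            Finset.sum_le_sum fun s _ => htail s (tv n) (htvpos n hn) (htvle1 n hn) n hn
        _ = ((SpeciesAux.cdfGrid Gc (tv n)).card : ENNReal) *
            (2 * ENNReal.ofReal (Real.exp (-((n:ℝ) * tv n ^ 2) / 4))) := by
            rw [Finset.sum_const, nsmul_eq_mul]
        _ ≤ ((2 * (⌈1/tv n⌉₊ + 1) : ℕ) : ENNReal) *
            (2 * ENNReal.ofReal (Real.exp (-((n:ℝ) * tv n ^ 2) / 4))) := by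
            gcongr
            exact_mod_cast SpeciesAux.cdfGrid_card Gc (tv n)
    -- the summable majorant
    set q : ℝ := 2 * δ' with hq
    have hqpos : 0 < q := by simp only [hq]; linarith
    set c : ℝ := ε ^ 2 / 4 with hc
    have hcpos : 0 < c := by positivity
    set C : ℝ := (2 * ε⁻¹ + 4) * 2 with hC
    have hbnd_le : ∀ n : ℕ, 1 ≤ n →
        ((2 * (⌈1/tv n⌉₊ + 1) : ℕ) : ℝ) * (2 * Real.exp (-((n:ℝ) * tv n ^ 2) / 4))
          ≤ C * ((n:ℝ) * Real.exp (-(c * (n:ℝ) ^ q))) := by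
      intro n hn
      have h1n : (1:ℝ) ≤ n := by exact_mod_cast hn
      have hnpos : (0:ℝ) < n := by linarith
      have hexp_eq : -((n:ℝ) * tv n ^ 2) / 4 = -(c * (n:ℝ) ^ q) := by
        have e1 : ((n:ℝ) ^ (δ' - 1/2)) ^ 2 = (n:ℝ) ^ (2 * δ' - 1) := by
          rw [← Real.rpow_natCast ((n:ℝ) ^ (δ' - 1/2)) 2, ← Real.rpow_mul hnpos.le]
          norm_num
          ring_nf
        have e2 : (n:ℝ) * (n:ℝ) ^ (2 * δ' - 1) = (n:ℝ) ^ q := by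
          nth_rewrite 1 [← Real.rpow_one (n:ℝ)]
          rw [← Real.rpow_add hnpos]
          congr 1
          simp only [hq]
          ring
        simp only [htv]
        rw [mul_pow, e1]
        field_simp [hc]
        rw [hc, ← e2]; ring
      rw [hexp_eq]
      have hE : (0:ℝ) < Real.exp (-(c * (n:ℝ) ^ q)) := Real.exp_pos _
      have hceil : (⌈1/tv n⌉₊ : ℝ) ≤ 1/tv n + 1 :=
        (Nat.ceil_lt_add_one (div_nonneg zero_le_one (htvpos n hn).le)).le
      have h1tv : 1/tv n ≤ ε⁻¹ * n := by
        have hrw : 1/tv n = ε⁻¹ * (n:ℝ) ^ ((1:ℝ)/2 - δ') := by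
          simp only [htv]
          rw [one_div, mul_inv, ← Real.rpow_neg hnpos.le]
          congr 1
          ring
        rw [hrw]
        have h2 : (n:ℝ) ^ ((1:ℝ)/2 - δ') ≤ (n:ℝ) ^ (1:ℝ) :=
          Real.rpow_le_rpow_of_exponent_le h1n (by linarith)
        rw [Real.rpow_one] at h2
        have : (0:ℝ) ≤ ε⁻¹ := by positivity
        nlinarith
      have hcastle : ((2 * (⌈1/tv n⌉₊ + 1) : ℕ) : ℝ) = 2 * ((⌈1/tv n⌉₊ : ℝ) + 1) := by
        push_cast; ring
      rw [hcastle]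
      have hinv : (0:ℝ) < ε⁻¹ := by positivity
      simp only [hC]
      nlinarith [hceil, h1tv, hE.le, h1n, hinv]
    have hsummajor : Summable (fun n : ℕ =>
        C * (((n+1 : ℕ):ℝ) * Real.exp (-(c * ((n+1 : ℕ):ℝ) ^ q)))) := by
      have h1 : Summable (fun n : ℕ => C * ((n:ℝ) * Real.exp (-(c * (n:ℝ) ^ q)))) :=
        (SpeciesAux.summable_mul_exp_neg_rpow hcpos hqpos).mul_left C
      exact (summable_nat_add_iff (f := fun n : ℕ => C * ((n:ℝ) * Real.exp (-(c * (n:ℝ) ^ q)))) 1).2 h1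
    have htsum_ne : (∑' n : ℕ, P (Bad (n + 1))) ≠ ⊤ := by
      have hle : ∀ n : ℕ, P (Bad (n + 1)) ≤
          ENNReal.ofReal (C * (((n+1 : ℕ):ℝ) * Real.exp (-(c * ((n+1 : ℕ):ℝ) ^ q)))) :=
        fun n => le_trans (hPBad (n+1) (by omega))
          (ENNReal.ofReal_le_ofReal (hbnd_le (n+1) (by omega)))
      have hcalc : (∑' n : ℕ, P (Bad (n + 1))) ≤
          ENNReal.ofReal (∑' n : ℕ,
            C * (((n+1 : ℕ):ℝ) * Real.exp (-(c * ((n+1 : ℕ):ℝ) ^ q)))) := by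
        calc (∑' n : ℕ, P (Bad (n + 1)))
            ≤ ∑' n : ℕ, ENNReal.ofReal
              (C * (((n+1 : ℕ):ℝ) * Real.exp (-(c * ((n+1 : ℕ):ℝ) ^ q)))) :=
            ENNReal.tsum_le_tsum hle
          _ = ENNReal.ofReal (∑' n : ℕ,
              C * (((n+1 : ℕ):ℝ) * Real.exp (-(c * ((n+1 : ℕ):ℝ) ^ q)))) :=
            (ENNReal.ofReal_tsum_of_nonneg (fun n => by positivity) hsummajor).symm
      exact (lt_of_le_of_lt hcalc ENNReal.ofReal_lt_top).ne
    have hBC := MeasureTheory.ae_eventually_notMem htsum_ne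
    filter_upwards [hBC] with ω hω
    obtain ⟨M, hM⟩ := eventually_atTop.1 hω
    rw [eventually_atTop]
    refine ⟨M + 1, fun n hn => ?_⟩
    have hn1 : 1 ≤ n := by omega
    have hnotbad : ω ∉ Bad n := by
      have h1 := hM (n - 1) (by omega)
      rwa [Nat.sub_add_cancel hn1] at h1
    have hgrid : ∀ s ∈ SpeciesAux.cdfGrid Gc (tv n), |eF n ω s - Gc s| ≤ tv n := by
      intro s hs
      by_contra hcon
      push_neg at hcon
      exact hnotbad (by rw [hBad]; exact Set.mem_iUnion₂.2 ⟨s, hs, hcon⟩)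
    have hcdf : ∀ k, |eF n ω k - Gc k| ≤ 2 * tv n :=
      SpeciesAux.grid_bound (htvpos n hn1) hGcmono hGc0 hGctend (heFmono n ω)
        (heF0 n ω) (heF1 n ω) hgrid
    have hpmf : ∀ x, |empirical X n ω x - θ x| ≤ 4 * tv n := by
      intro x
      have h1 := hemp_bound n ω (2 * tv n) hcdf x
      linarith
    have htvnn : 0 ≤ tv n := (htvpos n hn1).le
    have hnaive : ∀ j, |naive X n ω j - θ j| ≤ 4 * tv n := fun j =>
      SpeciesAux.abs_rearrange_sub_le hθ0 hθanti hθsum (hemp0 n ω) (hempsummable n ω)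
        (by linarith : (0:ℝ) ≤ 4 * tv n) hpmf j
    have hsup : (⨆ x, |naive X n ω x - θ x|) ≤ 4 * tv n := ciSup_le hnaive
    calc (⨆ x, |naive X n ω x - θ x|) ≤ 4 * tv n := hsup
      _ = 4 * ε * (n:ℝ) ^ (δ' - 1/2) := by
        simp only [htv]; ring
  -- assemble
  have key' : ∀ᵐ ω ∂P, ∀ m : ℕ, ∀ᶠ n : ℕ in atTop,
      (⨆ x, |naive X n ω x - θ x|) ≤ 4 * ((1:ℝ)/((m:ℝ)+1)) * (n:ℝ) ^ (δ' - 1/2) :=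
    ae_all_iff.2 key
  filter_upwards [key'] with ω hω
  rw [Metric.tendsto_atTop]
  intro εf hεf
  obtain ⟨m, hm⟩ := exists_nat_one_div_lt (show (0:ℝ) < εf/4 by linarith)
  obtain ⟨N, hN⟩ := eventually_atTop.1 (hω m)
  refine ⟨max N 1, fun n hn => ?_⟩
  have hn1 : 1 ≤ n := le_trans (le_max_right _ _) hn
  have hnN : N ≤ n := le_trans (le_max_left _ _) hn
  have h1n : (1:ℝ) ≤ n := by exact_mod_cast hn1
  have hnpos : (0:ℝ) < n := by linarith
  have hsup_nonneg : 0 ≤ ⨆ x, |naive X n ω x - θ x| :=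
    Real.iSup_nonneg fun x => abs_nonneg _
  have hval_nonneg : 0 ≤ (n:ℝ) ^ ((1:ℝ)/2 - δ) * ⨆ x, |naive X n ω x - θ x| :=
    mul_nonneg (Real.rpow_nonneg hnpos.le _) hsup_nonneg
  rw [Real.dist_eq, sub_zero, abs_of_nonneg hval_nonneg]
  have hb := hN n hnN
  have hmono : (n:ℝ) ^ ((1:ℝ)/2 - δ) ≤ (n:ℝ) ^ ((1:ℝ)/2 - δ') :=
    Real.rpow_le_rpow_of_exponent_le h1n (by linarith)
  have hprod : (n:ℝ) ^ ((1:ℝ)/2 - δ') * (n:ℝ) ^ (δ' - 1/2) = 1 := by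
    rw [← Real.rpow_add hnpos]
    norm_num
  calc (n:ℝ) ^ ((1:ℝ)/2 - δ) * ⨆ x, |naive X n ω x - θ x|
      ≤ (n:ℝ) ^ ((1:ℝ)/2 - δ') * ⨆ x, |naive X n ω x - θ x| :=
        mul_le_mul_of_nonneg_right hmono hsup_nonneg
    _ ≤ (n:ℝ) ^ ((1:ℝ)/2 - δ') * (4 * ((1:ℝ)/((m:ℝ)+1)) * (n:ℝ) ^ (δ' - 1/2)) :=
        mul_le_mul_of_nonneg_left hb (Real.rpow_nonneg hnpos.le _)
    _ = 4 * ((1:ℝ)/((m:ℝ)+1)) * ((n:ℝ) ^ ((1:ℝ)/2 - δ') * (n:ℝ) ^ (δ' - 1/2)) := by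
        ring
    _ = 4 * ((1:ℝ)/((m:ℝ)+1)) := by rw [hprod, mul_one]
    _ < εf := by linarith
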